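/- If S is a subset of vertices of size k that is NOT an independent set of G (i.e., S contains both endpoints of at least one edge), then the principal submatrix C_{S,S} is positive definite and tr((C_{S,S})⁻¹) > k/n. -/

import Mathlib

open Matrix Finset


theorem stmt2 (n : ℕ) (hn : 1 ≤ n) (G : SimpleGraph (Fin n)) [DecidableRel G.Adj]
    (k : ℕ) (hk1 : 1 ≤ k) (hkn : k ≤ n)
    (C : Matrix (Fin n) (Fin n) ℝ)
    (hC : ∀ i j, C i j = if i = j then (n : ℝ) else if G.Adj i j then 1 else 0)
    (S : Finset (Fin n)) (hS : S.card = k)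
    (hnotind : ∃ i ∈ S, ∃ j ∈ S, G.Adj i j) :
    (C.submatrix (fun i : {x : Fin n // x ∈ S} => i.1)
        (fun i : {x : Fin n // x ∈ S} => i.1)).PosDef ∧
    (k : ℝ) / n < Matrix.trace ((C.submatrix (fun i : {x : Fin n // x ∈ S} => i.1)
        (fun i : {x : Fin n // x ∈ S} => i.1))⁻¹) := by
  have hn0 : (0:ℝ) < n := by exact_mod_cast hn
  set ι := {x : Fin n // x ∈ S}
  set M : Matrix ι ι ℝ := C.submatrix (fun i : ι => i.1) (fun i : ι => i.1) with hMdef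
  set A : Matrix ι ι ℝ := Matrix.of fun i j : ι => if G.Adj i.1 j.1 then 1 else 0 with hAdef
  have hcard : Fintype.card ι = k := by
    rw [show Fintype.card ι = S.card from Fintype.card_coe S, hS]
  have hAsymm : ∀ i j : ι, A i j = A j i := by
    intro i j
    simp only [hAdef, Matrix.of_apply]
    simp [G.adj_comm]
  have hAdiag : ∀ i : ι, A i i = 0 := by
    intro i; simp [hAdef, G.irrefl]
  have hMeq : M = (n : ℝ) • (1 : Matrix ι ι ℝ) + A := by
    ext i j
    simp only [hMdef, Matrix.submatrix_apply, hC, Matrix.add_apply, Matrix.smul_apply,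
      Matrix.one_apply, hAdef, Matrix.of_apply, smul_eq_mul]
    by_cases h : i = j
    · subst h
      simp [G.irrefl]
    · have h' : i.1 ≠ j.1 := fun hh => h (Subtype.ext hh)
      simp [h, h']
  -- positive definiteness
  have hHerm : M.IsHermitian := by
    rw [hMeq]
    unfold Matrix.IsHermitian
    ext i j
    simp only [Matrix.conjTranspose_apply, Matrix.add_apply, Matrix.smul_apply,
      Matrix.one_apply, star_trivial]
    rw [hAsymm j i]
    congr 1
    simp only [eq_comm]
  have hPD : M.PosDef := by
    refine Matrix.PosDef.of_dotProduct_mulVec_pos hHerm fun x hx => ?_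
    have hs2 : 0 < ∑ i : ι, x i ^ 2 := by
      obtain ⟨i0, hi0⟩ := Function.ne_iff.mp hx
      refine Finset.sum_pos' (fun i _ => sq_nonneg _) ⟨i0, Finset.mem_univ _, ?_⟩
      exact pow_pos (abs_pos.mpr hi0) 2 |>.trans_eq (sq_abs _)
    have key : ∀ i j : ι, (if i = j then x i ^ 2 else 0) - |x i| * |x j| ≤ A i j * x i * x j := by
      intro i j
      by_cases h : i = j
      · subst h
        rw [hAdiag i]
        simp [abs_mul_abs_self, sq]
      · simp only [h, if_false, zero_sub]
        have : -(|x i| * |x j|) ≤ (if G.Adj i.1 j.1 then (1:ℝ) else 0) * x i * x j := by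
          split_ifs with hadj
          · rw [one_mul, ← abs_mul]
            exact neg_abs_le _
          · simp only [zero_mul]
            exact neg_nonpos.mpr (by positivity)
        simpa [hAdef] using this
    have hquad : star x ⬝ᵥ M *ᵥ x = (n:ℝ) * ∑ i : ι, x i ^ 2 + ∑ i : ι, ∑ j : ι, A i j * x i * x j := by
      rw [hMeq, Matrix.add_mulVec, Matrix.smul_mulVec, Matrix.one_mulVec,
        dotProduct_add, dotProduct_smul, star_trivial]
      congr 1
      · rw [smul_eq_mul]
        congr 1
        simp only [dotProduct]
        exact Finset.sum_congr rfl fun i _ => (sq (x i)).symm ▸ (sq (x i))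
      · simp only [dotProduct, Matrix.mulVec, dotProduct]
        refine Finset.sum_congr rfl fun i _ => ?_
        rw [Finset.mul_sum]
        exact Finset.sum_congr rfl fun j _ => by ring
    have hCS : (∑ i : ι, |x i|) ^ 2 ≤ (k:ℝ) * ∑ i : ι, x i ^ 2 := by
      have := sq_sum_le_card_mul_sum_sq (s := (Finset.univ : Finset ι)) (f := fun i => |x i|)
      simp only [Finset.card_univ, hcard, sq_abs] at this
      exact_mod_cast this
    have hQ : (∑ i : ι, x i ^ 2) - (∑ i : ι, |x i|) ^ 2 ≤ ∑ i : ι, ∑ j : ι, A i j * x i * x j := by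
      have h1 : ∑ i : ι, ∑ j : ι, ((if i = j then x i ^ 2 else 0) - |x i| * |x j|)
          ≤ ∑ i : ι, ∑ j : ι, A i j * x i * x j :=
        Finset.sum_le_sum fun i _ => Finset.sum_le_sum fun j _ => key i j
      calc (∑ i : ι, x i ^ 2) - (∑ i : ι, |x i|) ^ 2
          = ∑ i : ι, ∑ j : ι, ((if i = j then x i ^ 2 else 0) - |x i| * |x j|) := by
            simp only [Finset.sum_sub_distrib, Finset.sum_ite_eq, Finset.mem_univ, if_true,
              ← Finset.mul_sum, ← Finset.sum_mul]
            ring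
          _ ≤ _ := h1
    rw [hquad]
    nlinarith [hQ, hCS, hs2, (show (k:ℝ) ≤ n by exact_mod_cast hkn)]
  refine ⟨hPD, ?_⟩
  -- invertibility
  have hdet : IsUnit M.det := isUnit_iff_ne_zero.mpr hPD.det_pos.ne'
  have hinv1 : M⁻¹ * M = 1 := Matrix.nonsing_inv_mul M hdet
  have hInvPD : M⁻¹.PosDef := hPD.inv
  -- trace of A is zero
  have htrA : Matrix.trace A = 0 := by
    simp [Matrix.trace, Matrix.diag, hAdiag]
  -- A = n⁻¹ • (M * A - A * A)
  have hMA : M * A = (n:ℝ) • A + A * A := by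
    rw [hMeq, add_mul, Matrix.smul_mul, one_mul]
  have hAeq : A = (n:ℝ)⁻¹ • (M * A - A * A) := by
    rw [hMA]
    rw [add_sub_cancel_right, smul_smul, inv_mul_cancel₀ hn0.ne', one_smul]
  have hinvA : M⁻¹ * A = (n:ℝ)⁻¹ • (A - M⁻¹ * (A * A)) := by
    calc M⁻¹ * A = M⁻¹ * ((n:ℝ)⁻¹ • (M * A - A * A)) := by rw [← hAeq]
      _ = (n:ℝ)⁻¹ • (M⁻¹ * (M * A) - M⁻¹ * (A * A)) := by
          rw [Matrix.mul_smul, Matrix.mul_sub]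
      _ = (n:ℝ)⁻¹ • (A - M⁻¹ * (A * A)) := by
          rw [← Matrix.mul_assoc, hinv1, Matrix.one_mul]
  set t : ℝ := Matrix.trace (M⁻¹ * (A * A)) with htdef
  -- t > 0
  have ht : 0 < t := by
    obtain ⟨i0, hi0, j0, hj0, hadj⟩ := hnotind
    have hcyc : t = Matrix.trace (A * (M⁻¹ * A)) := by
      rw [htdef, ← Matrix.mul_assoc, Matrix.trace_mul_comm]
    have hdiag : ∀ j : ι, (A * (M⁻¹ * A)) j j
        = star (fun l : ι => A l j) ⬝ᵥ M⁻¹ *ᵥ (fun l : ι => A l j) := by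
      intro j
      simp only [star_trivial, Matrix.mul_apply, dotProduct, Matrix.mulVec, dotProduct,
        Finset.mul_sum]
      refine Finset.sum_congr rfl fun i _ => ?_
      refine Finset.sum_congr rfl fun l _ => ?_
      rw [hAsymm j i]
    rw [hcyc, Matrix.trace]
    refine Finset.sum_pos' (fun j _ => ?_) ?_
    · rw [Matrix.diag_apply, hdiag j]
      by_cases hz : (fun l : ι => A l j) = 0
      · rw [hz]
        simp
      · exact le_of_lt (hInvPD.dotProduct_mulVec_pos hz)
    · refine ⟨⟨j0, hj0⟩, Finset.mem_univ _, ?_⟩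
      rw [Matrix.diag_apply, hdiag ⟨j0, hj0⟩]
      refine hInvPD.dotProduct_mulVec_pos ?_
      intro hz
      have : A ⟨i0, hi0⟩ ⟨j0, hj0⟩ = 0 := congrFun hz ⟨i0, hi0⟩
      rw [hAdef] at this
      simp [hadj] at this
  -- trace identity
  have htr1 : (n:ℝ) * Matrix.trace M⁻¹ + Matrix.trace (M⁻¹ * A) = k := by
    have : M⁻¹ * M = (n:ℝ) • M⁻¹ + M⁻¹ * A := by
      rw [hMeq, Matrix.mul_add, Matrix.mul_smul, Matrix.mul_one]
    rw [hinv1] at this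
    have h2 := congrArg Matrix.trace this
    rw [Matrix.trace_one, Matrix.trace_add, Matrix.trace_smul, hcard, smul_eq_mul] at h2
    exact h2.symm
  have htr2 : Matrix.trace (M⁻¹ * A) = -((n:ℝ)⁻¹ * t) := by
    rw [hinvA, Matrix.trace_smul, Matrix.trace_sub, htrA, htdef]
    simp [smul_eq_mul]
  rw [htr2] at htr1
  rw [div_lt_iff₀ hn0]
  have hne : (n:ℝ) ≠ 0 := hn0.ne'
  have : Matrix.trace M⁻¹ * n = k + (n:ℝ)⁻¹ * t := by
    field_simp at htr1 ⊢
    linarith [htr1]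
  rw [this]
  have : 0 < (n:ℝ)⁻¹ * t := by positivity
  linarith
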